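/- If A, B : [t₀,∞) → M_m(ℝ) are continuous, then the system ẍ + A(t)ẋ + B(t)x = 0 is L₀-equivalent to some system ξ̈ + V(t)ξ̇ + W(t)ξ = 0 with V, W continuous on [t₀,∞) and W(t) = W(t)ᵀ for all t ≥ t₀. -/

import Mathlib

open Matrix Set intervalIntegral

attribute [local instance] Matrix.frobeniusNormedAddCommGroup Matrix.frobeniusNormedSpace

/-- An `L_k`-matrix on `[t₀,∞)`: a `C²` matrix function with `|det L(t)| ≥ η > 0` and
`sup_{t ≥ t₀} ‖(dⁱ/dtⁱ)L(t)‖ < ∞` for every `0 ≤ i ≤ k`. -/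
def IsLkMatrix (t₀ : ℝ) (k : ℕ) {m : ℕ} (L : ℝ → Matrix (Fin m) (Fin m) ℝ) : Prop :=
  ContDiffOn ℝ 2 L (Ici t₀) ∧
  (∃ η > (0:ℝ), ∀ t ∈ Ici t₀, η ≤ |(L t).det|) ∧
  (∀ i ≤ k, ∃ M : ℝ, ∀ t ∈ Ici t₀, ‖iteratedDerivWithin i L (Ici t₀) t‖ ≤ M)

/-- The system `ẍ + A(t)ẋ + B(t)x = 0` is `L_k`-equivalent to `ξ̈ + V(t)ξ̇ + W(t)ξ = 0`:
there is an `L_k`-matrix `L` with `V(t) = L(t)⁻¹(2L̇(t) + A(t)L(t))` and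
`W(t) = L(t)⁻¹(L̈(t) + A(t)L̇(t) + B(t)L(t))` for all `t ≥ t₀`. -/
def LkEquiv (t₀ : ℝ) (k : ℕ) {m : ℕ} (A B V W : ℝ → Matrix (Fin m) (Fin m) ℝ) : Prop :=
  ∃ L : ℝ → Matrix (Fin m) (Fin m) ℝ, IsLkMatrix t₀ k L ∧
    ∀ t ∈ Ici t₀,
      V t = (L t)⁻¹ * ((2:ℝ) • derivWithin L (Ici t₀) t + A t * L t) ∧
      W t = (L t)⁻¹ * (derivWithin (derivWithin L (Ici t₀)) (Ici t₀) t
              + A t * derivWithin L (Ici t₀) t + B t * L t)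

/-- `Λ(t) = 2∫_{t₀}^t S(ν) dν + S₀`. -/
noncomputable def Lam (t₀ : ℝ) {m : ℕ} (S : ℝ → Matrix (Fin m) (Fin m) ℝ)
    (S₀ : Matrix (Fin m) (Fin m) ℝ) (t : ℝ) : Matrix (Fin m) (Fin m) ℝ :=
  (2:ℝ) • (∫ ν in t₀..t, S ν) + S₀

open Filter Topology MeasureTheory

section ODEExist

variable {F : Type*} [NormedAddCommGroup F] [NormedSpace ℝ F] [CompleteSpace F]

/-- Picard iterates for the affine ODE `y' = G t y + c t`. -/
noncomputable def picardIt (G : ℝ → F →L[ℝ] F) (c : ℝ → F) (t₀ : ℝ) (y₀ : F) : ℕ → ℝ → F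
  | 0 => fun _ => y₀
  | n + 1 => fun t => y₀ + ∫ s in t₀..t, (G s (picardIt G c t₀ y₀ n s) + c s)

theorem picardIt_cont {G : ℝ → F →L[ℝ] F} {c : ℝ → F} (hG : Continuous G) (hc : Continuous c)
    (t₀ : ℝ) (y₀ : F) : ∀ n, Continuous (picardIt G c t₀ y₀ n)
  | 0 => continuous_const
  | n + 1 => by
      have h1 : Continuous fun s => G s (picardIt G c t₀ y₀ n s) + c s :=
        (hG.clm_apply (picardIt_cont hG hc t₀ y₀ n)).add hc
      exact continuous_const.add
        (intervalIntegral.continuous_primitive (fun a b => h1.intervalIntegrable a b) t₀)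

theorem picardIt_dist {G : ℝ → F →L[ℝ] F} {c : ℝ → F} (hG : Continuous G) (hc : Continuous c)
    (t₀ : ℝ) (y₀ : F) {T C D : ℝ} (hT : t₀ ≤ T) (hC0 : 0 ≤ C) (hD0 : 0 ≤ D)
    (hC : ∀ s ∈ Icc t₀ T, ‖G s‖ ≤ C)
    (hD : ∀ s ∈ Icc t₀ T, ‖picardIt G c t₀ y₀ 1 s - picardIt G c t₀ y₀ 0 s‖ ≤ D) :
    ∀ n, ∀ t ∈ Icc t₀ T, ‖picardIt G c t₀ y₀ (n + 1) t - picardIt G c t₀ y₀ n t‖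
        ≤ D * (C * (t - t₀)) ^ n / (Nat.factorial n : ℝ) := by
  intro n
  induction n with
  | zero => intro t ht; simpa using hD t ht
  | succ n ih =>
    intro t ht
    set u := picardIt G c t₀ y₀ with hu
    have hcont : ∀ k, Continuous (u k) := picardIt_cont hG hc t₀ y₀
    have hint : ∀ k, IntervalIntegrable (fun s => G s (u k s) + c s) volume t₀ t :=
      fun k => ((hG.clm_apply (hcont k)).add hc).intervalIntegrable t₀ t
    have key : u (n + 2) t - u (n + 1) t = ∫ s in t₀..t, G s (u (n + 1) s - u n s) := by
      show (y₀ + ∫ s in t₀..t, (G s (u (n+1) s) + c s)) - (y₀ + ∫ s in t₀..t, (G s (u n s) + c s)) = _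
      rw [add_sub_add_left_eq_sub, ← intervalIntegral.integral_sub (hint (n+1)) (hint n)]
      congr 1; ext s; rw [map_sub]; abel
    rw [key]
    have hbound : ∀ s ∈ Set.uIoc t₀ t, ‖G s (u (n + 1) s - u n s)‖
        ≤ D * C ^ (n+1) / (Nat.factorial n : ℝ) * (s - t₀) ^ n := by
      intro s hs
      rw [uIoc_of_le ht.1] at hs
      have hsI : s ∈ Icc t₀ T := ⟨hs.1.le, hs.2.trans ht.2⟩
      calc ‖G s (u (n + 1) s - u n s)‖ ≤ ‖G s‖ * ‖u (n + 1) s - u n s‖ := (G s).le_opNorm _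
        _ ≤ C * (D * (C * (s - t₀)) ^ n / (Nat.factorial n : ℝ)) := by
            apply mul_le_mul (hC s hsI) (ih s hsI) (norm_nonneg _) hC0
        _ = D * C ^ (n+1) / (Nat.factorial n : ℝ) * (s - t₀) ^ n := by rw [mul_pow]; ring
    have hgint : IntervalIntegrable (fun s => D * C ^ (n+1) / (Nat.factorial n : ℝ) * (s - t₀) ^ n) volume t₀ t :=
      (Continuous.intervalIntegrable (by continuity)) t₀ t
    calc ‖∫ s in t₀..t, G s (u (n + 1) s - u n s)‖
        ≤ |∫ s in t₀..t, D * C ^ (n+1) / (Nat.factorial n : ℝ) * (s - t₀) ^ n| := by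
          apply intervalIntegral.norm_integral_le_abs_of_norm_le _ hgint
          exact (ae_restrict_iff' measurableSet_uIoc).mpr (Eventually.of_forall hbound)
      _ = |D * C ^ (n+1) / (Nat.factorial n : ℝ) * ((t - t₀) ^ (n+1) / (n+1))| := by
          rw [intervalIntegral.integral_const_mul]
          congr 2
          have := intervalIntegral.integral_comp_sub_right (a := t₀) (b := t)
            (fun x => x ^ n) t₀
          rw [this, sub_self, integral_pow]
          simp
      _ ≤ D * (C * (t - t₀)) ^ (n + 1) / (Nat.factorial (n+1) : ℝ) := by
          have ht0 : (0:ℝ) ≤ t - t₀ := by linarith [ht.1]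
          have hfac : (0:ℝ) < (Nat.factorial n : ℝ) := by positivity
          rw [abs_of_nonneg (by positivity), mul_pow, Nat.factorial_succ]
          push_cast
          apply le_of_eq
          have h1 : (Nat.factorial n : ℝ) ≠ 0 := by positivity
          have h2 : ((n:ℝ) + 1) ≠ 0 := by positivity
          field_simp


theorem exists_linear_ode_solution (G : ℝ → F →L[ℝ] F) (c : ℝ → F) (hG : Continuous G)
    (hc : Continuous c) (t₀ : ℝ) (y₀ : F) :
    ∃ y : ℝ → F, Continuous y ∧ y t₀ = y₀ ∧
      ∀ t ∈ Ici t₀, HasDerivWithinAt y (G t (y t) + c t) (Ici t₀) t := by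
  set u := picardIt G c t₀ y₀ with hu
  have hcont : ∀ k, Continuous (u k) := picardIt_cont hG hc t₀ y₀
  -- summable bounds on every interval [t₀, T]
  have key : ∀ T, t₀ ≤ T → ∃ d : ℕ → ℝ, Summable d ∧ (∀ n, 0 ≤ d n) ∧
      ∀ n, ∀ t ∈ Icc t₀ T, ‖u (n + 1) t - u n t‖ ≤ d n := by
    intro T hT
    obtain ⟨C₀, hC₀⟩ := (isCompact_Icc (a := t₀) (b := T)).exists_bound_of_continuousOn
      hG.continuousOn
    obtain ⟨D₀, hD₀⟩ := (isCompact_Icc (a := t₀) (b := T)).exists_bound_of_continuousOn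
      ((hcont 1).sub (hcont 0)).continuousOn
    set C := max C₀ 0 with hC
    set D := max D₀ 0 with hDdef
    have hCb : ∀ s ∈ Icc t₀ T, ‖G s‖ ≤ C := fun s hs => (hC₀ s hs).trans (le_max_left _ _)
    have hDb : ∀ s ∈ Icc t₀ T, ‖u 1 s - u 0 s‖ ≤ D := fun s hs =>
      (hD₀ s hs).trans (le_max_left _ _)
    refine ⟨fun n => D * (C * (T - t₀)) ^ n / (Nat.factorial n : ℝ), ?_, ?_, ?_⟩
    · have := (Real.summable_pow_div_factorial (C * (T - t₀))).mul_left D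
      simpa [mul_div_assoc] using this
    · intro n
      have h1 : (0:ℝ) ≤ C * (T - t₀) := by
        have : (0:ℝ) ≤ C := le_max_right _ _
        nlinarith
      positivity
    · intro n t ht
      refine (picardIt_dist hG hc t₀ y₀ hT (le_max_right _ _) (le_max_right _ _) hCb hDb n
        t ht).trans ?_
      have h0C : (0:ℝ) ≤ C := le_max_right _ _
      have h0D : (0:ℝ) ≤ D := le_max_right _ _
      have h1 : (C * (t - t₀)) ^ n ≤ (C * (T - t₀)) ^ n := by
        apply pow_le_pow_left₀ (by nlinarith [ht.1]) (by nlinarith [ht.2])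
      have hfac : (0:ℝ) < (Nat.factorial n : ℝ) := by positivity
      have hTnn : (0:ℝ) ≤ C * (T - t₀) := by nlinarith [ht.1, ht.2]
      exact div_le_div₀ (by positivity) (mul_le_mul_of_nonneg_left h1 h0D) hfac le_rfl
  have hcauchy : ∀ t ∈ Ici t₀, CauchySeq fun n => u n t := by
    intro t ht
    obtain ⟨d, hd, _, hdb⟩ := key t ht
    apply cauchySeq_of_dist_le_of_summable d ?_ hd
    intro n
    rw [dist_eq_norm, norm_sub_rev]
    exact hdb n t ⟨ht, le_refl t⟩
  set ytil : ℝ → F := fun t => limUnder atTop fun n => u n t with hytil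
  have htend : ∀ t ∈ Ici t₀, Tendsto (fun n => u n t) atTop (𝓝 (ytil t)) := fun t ht =>
    (hcauchy t ht).tendsto_limUnder
  -- uniform tail bounds
  have htail : ∀ T, t₀ ≤ T → ∃ tail : ℕ → ℝ, Tendsto tail atTop (𝓝 0) ∧
      ∀ n, ∀ t ∈ Icc t₀ T, dist (u n t) (ytil t) ≤ tail n := by
    intro T hT
    obtain ⟨d, hd, hd0, hdb⟩ := key T hT
    refine ⟨fun n => ∑' m, d (n + m), ?_, ?_⟩
    · have h2 : (fun n => ∑' m, d (n + m)) = fun n => ∑' m, d (m + n) := by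
        funext n; congr 1; funext m; rw [add_comm]
      rw [h2]
      exact tendsto_sum_nat_add d
    · intro n t ht
      apply dist_le_tsum_of_dist_le_of_tendsto d ?_ hd (htend t ht.1) n
      intro k
      rw [dist_eq_norm, norm_sub_rev]
      exact hdb k t ht
  have hytilcont : ContinuousOn ytil (Ici t₀) := by
    intro t ht
    obtain ⟨tail, htail0, htailb⟩ := htail (t + 1) (by linarith [mem_Ici.mp ht])
    have huc : TendstoUniformlyOn (fun n s => u n s) ytil atTop (Icc t₀ (t + 1)) := by
      rw [Metric.tendstoUniformlyOn_iff]
      intro ε hε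
      filter_upwards [(tendsto_order.1 htail0).2 ε hε] with n hn s hs
      rw [dist_comm]
      exact (htailb n s hs).trans_lt hn
    have hIcc : ContinuousOn ytil (Icc t₀ (t + 1)) :=
      huc.continuousOn (Eventually.of_forall fun n => (hcont n).continuousOn).frequently
    have hmem : Icc t₀ (t + 1) ∈ 𝓝[Ici t₀] t := by
      apply mem_nhdsWithin.mpr
      exact ⟨Iio (t + 1), isOpen_Iio, lt_add_one t, fun s hs => ⟨hs.2, le_of_lt hs.1⟩⟩
    exact (hIcc.continuousWithinAt ⟨mem_Ici.mp ht, by linarith [mem_Ici.mp ht]⟩).mono_of_mem_nhdsWithin hmem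
  set y : ℝ → F := fun t => ytil (max t t₀) with hy
  have hyeq : ∀ t ∈ Ici t₀, y t = ytil t := fun t ht => by
    simp only [hy, max_eq_left (mem_Ici.mp ht)]
  have hycont : Continuous y :=
    hytilcont.comp_continuous (continuous_id.max continuous_const) fun x => le_max_right x t₀
  have hicont : Continuous fun s => G s (y s) + c s := (hG.clm_apply hycont).add hc
  have hinteq : ∀ t ∈ Ici t₀, y t = y₀ + ∫ s in t₀..t, (G s (y s) + c s) := by
    intro t ht
    obtain ⟨tail, htail0, htailb⟩ := htail t ht
    obtain ⟨C₀, hC₀⟩ := (isCompact_Icc (a := t₀) (b := t)).exists_bound_of_continuousOn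
      hG.continuousOn
    set C := max C₀ 0 with hC
    have h0C : (0:ℝ) ≤ C := le_max_right _ _
    have h1 : Tendsto (fun n => u (n + 1) t) atTop (𝓝 (y t)) := by
      rw [hyeq t ht]
      exact (htend t ht).comp (tendsto_add_atTop_nat 1)
    have h2 : Tendsto (fun n => u (n + 1) t) atTop (𝓝 (y₀ + ∫ s in t₀..t, (G s (y s) + c s))) := by
      rw [tendsto_iff_norm_sub_tendsto_zero]
      have hb : ∀ n, ‖u (n + 1) t - (y₀ + ∫ s in t₀..t, (G s (y s) + c s))‖
          ≤ C * tail n * (t - t₀) := by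
        intro n
        have hint1 : IntervalIntegrable (fun s => G s (u n s) + c s) volume t₀ t :=
          ((hG.clm_apply (hcont n)).add hc).intervalIntegrable t₀ t
        have hint2 : IntervalIntegrable (fun s => G s (y s) + c s) volume t₀ t :=
          hicont.intervalIntegrable t₀ t
        have e1 : u (n + 1) t - (y₀ + ∫ s in t₀..t, (G s (y s) + c s))
            = ∫ s in t₀..t, G s (u n s - y s) := by
          show (y₀ + ∫ s in t₀..t, (G s (u n s) + c s)) - _ = _
          rw [add_sub_add_left_eq_sub, ← intervalIntegral.integral_sub hint1 hint2]
          congr 1; ext s; rw [map_sub]; abel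
        rw [e1]
        have htn : 0 ≤ tail n := dist_nonneg.trans (htailb n t₀ ⟨le_rfl, mem_Ici.mp ht⟩)
        have hbnd : ∀ s ∈ Set.uIoc t₀ t, ‖G s (u n s - y s)‖ ≤ C * tail n := by
          intro s hs
          rw [uIoc_of_le (mem_Ici.mp ht)] at hs
          have hsI : s ∈ Icc t₀ t := ⟨hs.1.le, hs.2⟩
          calc ‖G s (u n s - y s)‖ ≤ ‖G s‖ * ‖u n s - y s‖ := (G s).le_opNorm _
            _ ≤ C * tail n := by
                apply mul_le_mul ((hC₀ s hsI).trans (le_max_left _ _)) ?_ (norm_nonneg _) h0C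
                rw [← dist_eq_norm, hyeq s hsI.1]
                exact htailb n s hsI
        calc ‖∫ s in t₀..t, G s (u n s - y s)‖
            ≤ |∫ s in t₀..t, C * tail n| := by
              apply intervalIntegral.norm_integral_le_abs_of_norm_le _
                (intervalIntegrable_const)
              exact (ae_restrict_iff' measurableSet_uIoc).mpr (Eventually.of_forall hbnd)
          _ ≤ C * tail n * (t - t₀) := by
              rw [intervalIntegral.integral_const, smul_eq_mul, abs_mul,
                abs_of_nonneg (sub_nonneg.mpr (mem_Ici.mp ht)),
                abs_of_nonneg (mul_nonneg h0C htn)]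
              apply le_of_eq; ring
      have hb0 : Tendsto (fun n => C * tail n * (t - t₀)) atTop (𝓝 0) := by
        have := (htail0.const_mul C).mul_const (t - t₀)
        simpa using this
      exact squeeze_zero (fun n => norm_nonneg _) hb hb0
    have := tendsto_nhds_unique h1 h2
    rw [← this]
  have hy0 : y t₀ = y₀ := by
    have := hinteq t₀ self_mem_Ici
    simpa [intervalIntegral.integral_same] using this
  refine ⟨y, hycont, hy0, ?_⟩
  intro t ht
  have hz : HasDerivAt (fun τ => y₀ + ∫ s in t₀..τ, (G s (y s) + c s)) (G t (y t) + c t) t :=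
    ((hicont.integral_hasStrictDerivAt t₀ t).hasDerivAt).const_add y₀
  exact hz.hasDerivWithinAt.congr (fun s hs => hinteq s hs) (hinteq t ht)

theorem linear_ode_unique (G : ℝ → F →L[ℝ] F) (c : ℝ → F) (hG : Continuous G) {t₀ : ℝ}
    {y z : ℝ → F} (hy : ContinuousOn y (Ici t₀)) (hz : ContinuousOn z (Ici t₀))
    (hy' : ∀ t ∈ Ici t₀, HasDerivWithinAt y (G t (y t) + c t) (Ici t₀) t)
    (hz' : ∀ t ∈ Ici t₀, HasDerivWithinAt z (G t (z t) + c t) (Ici t₀) t)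
    (h0 : y t₀ = z t₀) : ∀ t ∈ Ici t₀, y t = z t := by
  intro b hb
  rw [mem_Ici] at hb
  set q : ℝ → ℝ := fun s => min (max s t₀) b with hqdef
  have hq : ∀ s, q s ∈ Icc t₀ b := fun s => ⟨le_min (le_max_right _ _) hb, min_le_right _ _⟩
  have hqs : ∀ s ∈ Ico t₀ b, q s = s := by
    intro s hs
    simp only [hqdef, max_eq_left hs.1, min_eq_left hs.2.le]
  obtain ⟨C, hC⟩ := (isCompact_Icc (a := t₀) (b := b)).exists_bound_of_continuousOn
    hG.continuousOn
  set K : NNReal := ⟨max C 0, le_max_right _ _⟩ with hK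
  set v : ℝ → F → F := fun s x => G (q s) x + c (q s) with hv
  have hlip : ∀ s, LipschitzOnWith K (v s) univ := by
    intro s
    apply LipschitzWith.lipschitzOnWith
    apply LipschitzWith.of_dist_le_mul
    intro x₁ x₂
    simp only [hv, dist_eq_norm, add_sub_add_right_eq_sub, ← map_sub]
    calc ‖G (q s) (x₁ - x₂)‖ ≤ ‖G (q s)‖ * ‖x₁ - x₂‖ := (G (q s)).le_opNorm _
      _ ≤ K * ‖x₁ - x₂‖ :=
          mul_le_mul_of_nonneg_right ((hC _ (hq s)).trans (le_max_left _ _)) (norm_nonneg _)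
  have hyd : ∀ s ∈ Ico t₀ b, HasDerivWithinAt y (v s (y s)) (Ici s) s := by
    intro s hs
    have : v s (y s) = G s (y s) + c s := by simp only [hv, hqs s hs]
    rw [this]
    exact (hy' s hs.1).mono (Ici_subset_Ici.mpr hs.1)
  have hzd : ∀ s ∈ Ico t₀ b, HasDerivWithinAt z (v s (z s)) (Ici s) s := by
    intro s hs
    have : v s (z s) = G s (z s) + c s := by simp only [hv, hqs s hs]
    rw [this]
    exact (hz' s hs.1).mono (Ici_subset_Ici.mpr hs.1)
  have := ODE_solution_unique_of_mem_Icc_right (v := v) (s := fun _ => univ) (K := K) (fun s _ => hlip s)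
    (hy.mono Icc_subset_Ici_self) hyd (fun _ _ => mem_univ _)
    (hz.mono Icc_subset_Ici_self) hzd (fun _ _ => mem_univ _) h0
  exact this (right_mem_Icc.mpr hb)

end ODEExist
section MatrixODE

attribute [local instance] Matrix.frobeniusNormedAddCommGroup Matrix.frobeniusNormedSpace
  Matrix.frobeniusNormedRing Matrix.frobeniusNormedAlgebra

variable {m : ℕ}

/-- Transpose as a continuous linear map (w.r.t. the Frobenius norm). -/
noncomputable def transposeCLM : Matrix (Fin m) (Fin m) ℝ →L[ℝ] Matrix (Fin m) (Fin m) ℝ :=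
  LinearMap.mkContinuous
    { toFun := fun X => Xᵀ
      map_add' := fun X Y => Matrix.transpose_add X Y
      map_smul' := fun r X => Matrix.transpose_smul r X }
    1 (fun X => by simp [Matrix.frobenius_norm_transpose])

@[simp] lemma transposeCLM_apply (X : Matrix (Fin m) (Fin m) ℝ) : transposeCLM X = Xᵀ := rfl

lemma continuous_transpose' : Continuous (fun X : Matrix (Fin m) (Fin m) ℝ => Xᵀ) :=
  transposeCLM.continuous

theorem stmt6_aux (t₀ : ℝ) (A B : ℝ → Matrix (Fin m) (Fin m) ℝ)
    (hA : Continuous A) (hB : Continuous B) :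
    ∃ S L : ℝ → Matrix (Fin m) (Fin m) ℝ,
      Continuous S ∧ Continuous L ∧ L t₀ = 1 ∧
      (∀ t ∈ Ici t₀, (S t)ᵀ = - S t) ∧
      (∀ t ∈ Ici t₀, (L t)ᵀ * L t = 1) ∧
      (∀ t ∈ Ici t₀, HasDerivWithinAt S
        ((-(2⁻¹ : ℝ)) • (A t * S t + S t * (A t)ᵀ + (B t - (B t)ᵀ))) (Ici t₀) t) ∧
      (∀ t ∈ Ici t₀, HasDerivWithinAt L (S t * L t) (Ici t₀) t) := by
  classical
  set mulL := ContinuousLinearMap.mul ℝ (Matrix (Fin m) (Fin m) ℝ) with hmulLdef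
  set Φ : ℝ → Matrix (Fin m) (Fin m) ℝ →L[ℝ] Matrix (Fin m) (Fin m) ℝ :=
    fun t => (-(2⁻¹ : ℝ)) • (mulL (A t) + mulL.flip ((A t)ᵀ)) with hΦdef
  have hΦapp : ∀ t (X : Matrix (Fin m) (Fin m) ℝ),
      Φ t X = (-(2⁻¹ : ℝ)) • (A t * X + X * (A t)ᵀ) := by
    intro t X
    simp [hΦdef, hmulLdef, ContinuousLinearMap.mul_apply']
    rfl
  have hΦcont : Continuous Φ := by
    have := ((mulL.continuous.comp hA).add (mulL.flip.continuous.comp (continuous_transpose'.comp hA))).fun_const_smul (-(2⁻¹ : ℝ))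
    exact this
  set c₁ : ℝ → Matrix (Fin m) (Fin m) ℝ := fun t => (-(2⁻¹ : ℝ)) • (B t - (B t)ᵀ) with hc₁def
  have hc₁ : Continuous c₁ := (hB.sub (continuous_transpose'.comp hB)).fun_const_smul _
  obtain ⟨S, hScont, hS0, hS'⟩ := exists_linear_ode_solution Φ c₁ hΦcont hc₁ t₀ 0
  have hSd : ∀ t, Φ t (S t) + c₁ t
      = (-(2⁻¹ : ℝ)) • (A t * S t + S t * (A t)ᵀ + (B t - (B t)ᵀ)) := by
    intro t
    rw [hΦapp]
    simp only [hc₁def, ← smul_add]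
  -- skew-symmetry of S via uniqueness
  have hskew : ∀ t ∈ Ici t₀, (S t)ᵀ = - S t := by
    have hzc : Continuous fun τ => -(S τ)ᵀ := (continuous_transpose'.comp hScont).neg
    have hz : ∀ t ∈ Ici t₀,
        HasDerivWithinAt (fun τ => -(S τ)ᵀ) (Φ t (-(S t)ᵀ) + c₁ t) (Ici t₀) t := by
      intro t ht
      have h1 : HasDerivWithinAt (fun τ => -(S τ)ᵀ) (-(Φ t (S t) + c₁ t)ᵀ) (Ici t₀) t := by
        have h2 := (transposeCLM.hasFDerivAt (x := S t)).comp_hasDerivWithinAt t (hS' t ht)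
        exact h2.neg
      convert h1 using 1
      rw [hΦapp, hSd]
      simp only [hc₁def, Matrix.transpose_smul, Matrix.transpose_add, Matrix.transpose_sub,
        Matrix.transpose_mul, Matrix.transpose_transpose, mul_neg, neg_mul]
      module
    have huniq := linear_ode_unique Φ c₁ hΦcont hScont.continuousOn hzc.continuousOn
      hS' hz (by simp [hS0])
    intro t ht
    have h := huniq t ht
    conv_rhs => rw [h]
    rw [neg_neg]
  -- second ODE: L' = S * L
  obtain ⟨L, hLcont, hL0, hL'⟩ := exists_linear_ode_solution (fun t => mulL (S t))
    (fun _ => 0) (mulL.continuous.comp hScont) continuous_const t₀ 1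
  have hL'' : ∀ t ∈ Ici t₀, HasDerivWithinAt L (S t * L t) (Ici t₀) t := by
    intro t ht
    exact (hL' t ht).congr_deriv (by simp [hmulLdef])
  -- orthogonality of L
  have horth : ∀ t ∈ Ici t₀, (L t)ᵀ * L t = 1 := by
    have hP' : ∀ t ∈ Ici t₀,
        HasDerivWithinAt (fun τ => (L τ)ᵀ * L τ) 0 (Ici t₀) t := by
      intro t ht
      have h1 : HasDerivWithinAt (fun τ => (L τ)ᵀ) ((S t * L t)ᵀ) (Ici t₀) t := by
        exact (transposeCLM.hasFDerivAt (x := L t)).comp_hasDerivWithinAt t (hL'' t ht)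
      have h2 := h1.mul (hL'' t ht)
      refine h2.congr_deriv ?_
      rw [Matrix.transpose_mul, hskew t ht]
      simp only [Matrix.mul_assoc, Matrix.neg_mul, Matrix.mul_neg]
      abel
    intro t ht
    have hcontP : ContinuousOn (fun τ => (L τ)ᵀ * L τ) (Icc t₀ t) :=
      ((continuous_transpose'.comp hLcont).mul hLcont).continuousOn
    have := constant_of_has_deriv_right_zero hcontP
      (fun x hx => (hP' x hx.1).mono (Ici_subset_Ici.mpr hx.1)) t (right_mem_Icc.mpr ht)
    rw [this, hL0]
    simp
  refine ⟨S, L, hScont, hLcont, hL0, hskew, horth, ?_, hL''⟩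
  intro t ht
  have := hS' t ht
  exact this.congr_deriv (hSd t)

theorem stmt6_aux2 (t₀ : ℝ) (A B A' B' : ℝ → Matrix (Fin m) (Fin m) ℝ)
    (hA' : Continuous A') (hB' : Continuous B')
    (hAeq : ∀ t ∈ Ici t₀, A' t = A t) (hBeq : ∀ t ∈ Ici t₀, B' t = B t) :
    ∃ V W : ℝ → Matrix (Fin m) (Fin m) ℝ,
      ContinuousOn V (Ici t₀) ∧ ContinuousOn W (Ici t₀) ∧
      (∀ t ∈ Ici t₀, (W t)ᵀ = W t) ∧ LkEquiv t₀ 0 A B V W := by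
  classical
  obtain ⟨S, L, hScont, hLcont, hL0, hskew, horth, hS', hL'⟩ := stmt6_aux t₀ A' B' hA' hB'
  set Sd : ℝ → Matrix (Fin m) (Fin m) ℝ :=
    fun t => (-(2⁻¹ : ℝ)) • (A' t * S t + S t * (A' t)ᵀ + (B' t - (B' t)ᵀ)) with hSddef
  have hSdcont : Continuous Sd :=
    (((hA'.mul hScont).add (hScont.mul (continuous_transpose'.comp hA'))).add
      (hB'.sub (continuous_transpose'.comp hB'))).fun_const_smul _
  set DL : ℝ → Matrix (Fin m) (Fin m) ℝ := fun t => S t * L t with hDLdef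
  have hDLcont : Continuous DL := hScont.mul hLcont
  set DDL : ℝ → Matrix (Fin m) (Fin m) ℝ := fun t => Sd t * L t + S t * DL t with hDDLdef
  have hDDLcont : Continuous DDL := (hSdcont.mul hLcont).add (hScont.mul hDLcont)
  have hDL' : ∀ t ∈ Ici t₀, HasDerivWithinAt DL (DDL t) (Ici t₀) t :=
    fun t ht => (hS' t ht).mul (hL' t ht)
  have hUD := uniqueDiffOn_Ici t₀
  have hd1 : ∀ t ∈ Ici t₀, derivWithin L (Ici t₀) t = DL t :=
    fun t ht => (hL' t ht).derivWithin (hUD t ht)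
  have hd2 : ∀ t ∈ Ici t₀, derivWithin (derivWithin L (Ici t₀)) (Ici t₀) t = DDL t := by
    intro t ht
    refine (derivWithin_congr (fun s hs => hd1 s hs) (hd1 t ht)).trans ?_
    exact (hDL' t ht).derivWithin (hUD t ht)
  have hLC2 : ContDiffOn ℝ 2 L (Ici t₀) := by
    have hDL1 : ContDiffOn ℝ 1 DL (Ici t₀) := by
      rw [show (1 : WithTop ℕ∞) = 0 + 1 by norm_num, contDiffOn_succ_iff_derivWithin hUD]
      refine ⟨fun t ht => (hDL' t ht).differentiableWithinAt, by simp, ?_⟩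
      rw [contDiffOn_zero]
      exact hDDLcont.continuousOn.congr fun t ht => (hDL' t ht).derivWithin (hUD t ht)
    rw [show (2 : WithTop ℕ∞) = 1 + 1 by norm_num, contDiffOn_succ_iff_derivWithin hUD]
    refine ⟨fun t ht => (hL' t ht).differentiableWithinAt, by simp, ?_⟩
    exact hDL1.congr fun t ht => hd1 t ht
  have hLnorm : ∀ t ∈ Ici t₀, ‖L t‖ ≤ Real.sqrt m := by
    intro t ht
    rw [Matrix.frobenius_norm_def]
    have h2 : ∀ j, ∑ i, L t i j * L t i j = 1 := by
      intro j
      have h3 := congrFun (congrFun (horth t ht) j) j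
      rw [Matrix.mul_apply, Matrix.one_apply_eq] at h3
      simpa [Matrix.transpose_apply] using h3
    have h1 : ∑ i, ∑ j, ‖L t i j‖ ^ (2:ℝ) = (m : ℝ) := by
      rw [Finset.sum_comm]
      calc ∑ j, ∑ i, ‖L t i j‖ ^ (2:ℝ) = ∑ _j : Fin m, (1:ℝ) := by
            apply Finset.sum_congr rfl; intro j _
            rw [← h2 j]; apply Finset.sum_congr rfl; intro i _
            rw [Real.norm_eq_abs, show ((2:ℝ)) = ((2:ℕ):ℝ) by norm_num, Real.rpow_natCast,
              sq_abs, sq]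
        _ = (m:ℝ) := by simp
    rw [h1, ← Real.sqrt_eq_rpow]
  have hdet : ∀ t ∈ Ici t₀, (1:ℝ) ≤ |(L t).det| := by
    intro t ht
    have h1 : (L t).det * (L t).det = 1 := by
      have h2 := congrArg Matrix.det (horth t ht)
      rwa [Matrix.det_mul, Matrix.det_transpose, Matrix.det_one] at h2
    rcases mul_self_eq_one_iff.mp h1 with h | h <;> simp [h]
  have hinv : ∀ t ∈ Ici t₀, (L t)⁻¹ = (L t)ᵀ := fun t ht => Matrix.inv_eq_left_inv (horth t ht)
  have hAcont : ContinuousOn A (Ici t₀) := hA'.continuousOn.congr fun t ht => (hAeq t ht).symm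
  have hBcont : ContinuousOn B (Ici t₀) := hB'.continuousOn.congr fun t ht => (hBeq t ht).symm
  have hLtcont : Continuous fun t => (L t)ᵀ := continuous_transpose'.comp hLcont
  refine ⟨fun t => (L t)ᵀ * ((2:ℝ) • DL t + A t * L t),
          fun t => (L t)ᵀ * (DDL t + A t * DL t + B t * L t), ?_, ?_, ?_, ?_⟩
  · exact hLtcont.continuousOn.mul
      (((hDLcont.const_smul ((2:ℝ))).continuousOn).add (hAcont.mul hLcont.continuousOn))
  · exact hLtcont.continuousOn.mul
      ((hDDLcont.continuousOn.add (hAcont.mul hDLcont.continuousOn)).add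
        (hBcont.mul hLcont.continuousOn))
  · -- symmetry of W
    intro t ht
    dsimp only
    rw [← hAeq t ht, ← hBeq t ht]
    have hM : DDL t + A' t * DL t + B' t * L t
        = (Sd t + S t * S t + A' t * S t + B' t) * L t := by
      simp only [hDDLdef, hDLdef]
      noncomm_ring
    rw [hM]
    have hMsym : (Sd t + S t * S t + A' t * S t + B' t)ᵀ
        = Sd t + S t * S t + A' t * S t + B' t := by
      simp only [hSddef, Matrix.transpose_add, Matrix.transpose_smul, Matrix.transpose_sub,
        Matrix.transpose_mul, Matrix.transpose_transpose, hskew t ht, mul_neg, neg_mul]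
      module
    calc ((L t)ᵀ * ((Sd t + S t * S t + A' t * S t + B' t) * L t))ᵀ
        = (L t)ᵀ * ((Sd t + S t * S t + A' t * S t + B' t)ᵀ * ((L t)ᵀ)ᵀ) := by
          simp only [Matrix.transpose_mul, Matrix.transpose_transpose, Matrix.mul_assoc]
      _ = (L t)ᵀ * ((Sd t + S t * S t + A' t * S t + B' t) * L t) := by
          rw [hMsym, Matrix.transpose_transpose]
  · -- LkEquiv
    refine ⟨L, ⟨hLC2, ⟨1, one_pos, hdet⟩, ?_⟩, ?_⟩
    · intro i hi
      obtain rfl : i = 0 := Nat.le_zero.mp hi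
      exact ⟨Real.sqrt m, fun t ht => by rw [iteratedDerivWithin_zero]; exact hLnorm t ht⟩
    · intro t ht
      constructor
      · dsimp only; rw [hinv t ht, hd1 t ht]
      · dsimp only; rw [hinv t ht, hd1 t ht, hd2 t ht]

end MatrixODE

/-- If `A, B` are continuous on `[t₀,∞)`, then the system
`ẍ + A(t)ẋ + B(t)x = 0` is `L₀`-equivalent to some system `ξ̈ + V(t)ξ̇ + W(t)ξ = 0`
with `V, W` continuous and `W(t)` symmetric for all `t ≥ t₀`. -/
theorem stmt_6 {m : ℕ} (t₀ : ℝ) (A B : ℝ → Matrix (Fin m) (Fin m) ℝ)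
    (hA : ContinuousOn A (Ici t₀)) (hB : ContinuousOn B (Ici t₀)) :
    ∃ V W : ℝ → Matrix (Fin m) (Fin m) ℝ,
      ContinuousOn V (Ici t₀) ∧ ContinuousOn W (Ici t₀) ∧
      (∀ t ∈ Ici t₀, (W t)ᵀ = W t) ∧ LkEquiv t₀ 0 A B V W := by
  have hA' : Continuous (fun t => A (max t t₀)) :=
    hA.comp_continuous (continuous_id.max continuous_const) fun x => le_max_right x t₀
  have hB' : Continuous (fun t => B (max t t₀)) :=
    hB.comp_continuous (continuous_id.max continuous_const) fun x => le_max_right x t₀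
  exact stmt6_aux2 t₀ A B _ _ hA' hB'
    (fun t ht => by simp [max_eq_left (mem_Ici.mp ht)])
    (fun t ht => by simp [max_eq_left (mem_Ici.mp ht)])
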